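/- arXiv:1302.2703 — 4 statements merged into one kernel-verified Lean document; each statement's English description precedes it below -/
import Mathlib

section
/- Let G be a finite simple graph whose k vertices of largest degree form a set Q such that Σ_{q∈Q} deg(q) = k(k−1) + Σ_{p∉Q} min{k, deg(p)}. Then Q is a clique in G. -/
open SimpleGraph Finset

/-- `s` is an independent set in `G`. -/
def IsIndepSet {α : Type*} (G : SimpleGraph α) (s : Set α) : Prop :=
  s.Pairwise fun a b => ¬ G.Adj a b

/-- `(G, A, B)` is a splitted graph: `A` an independent set and `B` a clique
partitioning the vertex set of `G`. -/
def IsSplitted {α : Type*} (G : SimpleGraph α) (A B : Set α) : Prop :=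
  _root_.IsIndepSet G A ∧ G.IsClique B ∧ A ∪ B = Set.univ ∧ Disjoint A B

/-- `G` is a split graph. -/
def IsSplitGraph {α : Type*} (G : SimpleGraph α) : Prop :=
  ∃ A B : Set α, IsSplitted G A B

/-- Tyshkevich composition `(G, A, B) ∘ H`: the disjoint union of `G` and `H`
together with all edges between the clique `B` and the vertices of `H`. -/
def comp {α β : Type*} (G : SimpleGraph α) (B : Set α) (H : SimpleGraph β) :
    SimpleGraph (α ⊕ β) where
  Adj x y :=
    match x, y with
    | Sum.inl a, Sum.inl a' => G.Adj a a'
    | Sum.inr b, Sum.inr b' => H.Adj b b'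
    | Sum.inl a, Sum.inr _ => a ∈ B
    | Sum.inr _, Sum.inl a => a ∈ B
  symm := ⟨by
    rintro (a | b) (a' | b') h
    · exact G.adj_symm h
    · exact h
    · exact h
    · exact H.adj_symm h⟩
  loopless := ⟨by
    rintro (a | b) h
    · exact G.irrefl h
    · exact H.irrefl h⟩

/-- The degree of a vertex, as the cardinality of its neighborhood. -/
noncomputable def deg {α : Type*} (G : SimpleGraph α) (v : α) : ℕ :=
  (G.neighborSet v).ncard

/-- The disjoint union of two edges. -/
def twoK2 : SimpleGraph (Fin 4) :=
  SimpleGraph.fromRel fun a b => (a.val = 0 ∧ b.val = 1) ∨ (a.val = 2 ∧ b.val = 3)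

/-- The 4-cycle. -/
def cycle4 : SimpleGraph (Fin 4) :=
  SimpleGraph.fromRel fun a b =>
    (a.val = 0 ∧ b.val = 1) ∨ (a.val = 1 ∧ b.val = 2) ∨
    (a.val = 2 ∧ b.val = 3) ∨ (a.val = 3 ∧ b.val = 0)

/-- The path on four vertices. -/
def path4 : SimpleGraph (Fin 4) :=
  SimpleGraph.fromRel fun a b =>
    (a.val = 0 ∧ b.val = 1) ∨ (a.val = 1 ∧ b.val = 2) ∨ (a.val = 2 ∧ b.val = 3)

/-- The 5-cycle. -/
def cycle5 : SimpleGraph (Fin 5) :=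
  SimpleGraph.fromRel fun a b =>
    (a.val = 0 ∧ b.val = 1) ∨ (a.val = 1 ∧ b.val = 2) ∨
    (a.val = 2 ∧ b.val = 3) ∨ (a.val = 3 ∧ b.val = 4) ∨ (a.val = 4 ∧ b.val = 0)

/-- if the `k` vertices of largest degree form a set `Q` attaining
the `k`-th Erdős–Gallai bound with equality, then `Q` is a clique. -/
theorem stmt3 {V : Type*} [Fintype V] [DecidableEq V] (G : SimpleGraph V) (k : ℕ)
    (Q : Finset V) (hcard : Q.card = k)
    (hmax : ∀ q ∈ Q, ∀ p ∉ Q, deg G p ≤ deg G q)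
    (heq : ∑ q ∈ Q, deg G q = k * (k - 1) + ∑ p ∈ Qᶜ, min k (deg G p)) :
    G.IsClique ↑Q := by
  classical
  have hdeg : ∀ v, deg G v = G.degree v := fun v => by
    rw [deg, SimpleGraph.degree, SimpleGraph.neighborFinset,
      Set.ncard_eq_toFinset_card']
  -- split degree of v into neighbors in Q and neighbors outside Q
  have hsplit : ∀ v, deg G v =
      (Q.filter (G.Adj v)).card + (Qᶜ.filter (G.Adj v)).card := by
    intro v
    rw [hdeg]
    have h1 : Q.filter (G.Adj v) = (G.neighborFinset v).filter (· ∈ Q) := by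
      ext x; simp [and_comm]
    have h2 : Qᶜ.filter (G.Adj v) = (G.neighborFinset v).filter (· ∉ Q) := by
      ext x; simp [and_comm]
    rw [h1, h2, Finset.card_filter_add_card_filter_not]
    rfl
  -- double counting cross edges
  have hcross : ∑ q ∈ Q, (Qᶜ.filter (G.Adj q)).card
      = ∑ p ∈ Qᶜ, (Q.filter (G.Adj p)).card := by
    simp only [Finset.card_filter]
    rw [Finset.sum_comm]
    refine Finset.sum_congr rfl fun p _ => Finset.sum_congr rfl fun q _ => ?_
    simp [G.adj_comm]
  -- bound inside part
  have hin : ∀ q ∈ Q, (Q.filter (G.Adj q)).card ≤ k - 1 := by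
    intro q hq
    have hsub : Q.filter (G.Adj q) ⊆ Q.erase q := by
      intro x hx
      simp only [Finset.mem_filter] at hx
      exact Finset.mem_erase.mpr ⟨fun h => G.loopless.irrefl q (h ▸ hx.2), hx.1⟩
    calc (Q.filter (G.Adj q)).card ≤ (Q.erase q).card := Finset.card_le_card hsub
      _ = k - 1 := by rw [Finset.card_erase_of_mem hq, hcard]
  -- bound outside part
  have hout : ∀ p, (Q.filter (G.Adj p)).card ≤ min k (deg G p) := by
    intro p
    refine le_min ?_ ?_
    · calc (Q.filter (G.Adj p)).card ≤ Q.card := Finset.card_le_card (Finset.filter_subset _ _)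
        _ = k := hcard
    · rw [hdeg]
      refine Finset.card_le_card fun x hx => ?_
      simp only [Finset.mem_filter] at hx
      simpa [SimpleGraph.mem_neighborFinset] using hx.2
  have hS1le : ∑ q ∈ Q, (Q.filter (G.Adj q)).card ≤ k * (k - 1) := by
    calc ∑ q ∈ Q, (Q.filter (G.Adj q)).card ≤ ∑ _q ∈ Q, (k - 1) :=
        Finset.sum_le_sum hin
      _ = k * (k - 1) := by rw [Finset.sum_const, hcard, smul_eq_mul]
  have hS2le : ∑ p ∈ Qᶜ, (Q.filter (G.Adj p)).card ≤ ∑ p ∈ Qᶜ, min k (deg G p) :=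
    Finset.sum_le_sum fun p _ => hout p
  have heq2 : ∑ q ∈ Q, (Q.filter (G.Adj q)).card
      + ∑ p ∈ Qᶜ, (Q.filter (G.Adj p)).card
      = k * (k - 1) + ∑ p ∈ Qᶜ, min k (deg G p) := by
    rw [← hcross, ← Finset.sum_add_distrib]
    rw [← heq]
    exact Finset.sum_congr rfl fun q _ => (hsplit q).symm
  have hS1 : ∑ q ∈ Q, (Q.filter (G.Adj q)).card = k * (k - 1) := by omega
  -- each term equals k - 1
  have hterm : ∀ q ∈ Q, (Q.filter (G.Adj q)).card = k - 1 := by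
    have := (Finset.sum_eq_sum_iff_of_le hin).mp ?_
    · exact this
    · rw [hS1, Finset.sum_const, hcard, smul_eq_mul]
  intro q hq q' hq' hne
  have hk : 1 ≤ k := hcard ▸ Finset.card_pos.mpr ⟨q, hq⟩
  have hsub : Q.filter (G.Adj q) ⊆ Q.erase q := by
    intro x hx
    simp only [Finset.mem_filter] at hx
    exact Finset.mem_erase.mpr ⟨fun h => G.loopless.irrefl q (h ▸ hx.2), hx.1⟩
  have hfeq : Q.filter (G.Adj q) = Q.erase q := by
    refine Finset.eq_of_subset_of_card_le hsub ?_
    rw [Finset.card_erase_of_mem hq, hcard, hterm q hq]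
  have : q' ∈ Q.filter (G.Adj q) := by
    rw [hfeq]
    exact Finset.mem_erase.mpr ⟨fun h => hne h.symm, hq'⟩
  exact (Finset.mem_filter.mp this).2
end

section
/- If a graph H is decomposable in the sense of Tyshkevich, i.e., H is isomorphic to a composition (H_1, A, B) ∘ H_0 where H_1 is a split graph with independent set A and clique B, both H_1 and H_0 have at least one vertex, then the complement of H is also decomposable: specifically, the complement of (H_1, A, B) ∘ H_0 is isomorphic to (complement of H_1, B, A) ∘ (complement of H_0). -/
open SimpleGraph Finset

/-- the complement of a composition `(G, A, B) ∘ H` is the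
composition `(Gᶜ, B, A) ∘ Hᶜ`; hence complements of decomposable graphs are
decomposable. -/
theorem stmt4 {α β : Type*} (G : SimpleGraph α) (H : SimpleGraph β) (A B : Set α)
    (hsplit : IsSplitted G A B) (hα : Nonempty α) (hβ : Nonempty β) :
    Nonempty ((comp G B H)ᶜ ≃g comp Gᶜ A Hᶜ) := by
  obtain ⟨hA, hB, hcov, hdis⟩ := hsplit
  have hmem : ∀ a : α, a ∈ A ↔ a ∉ B := by
    intro a
    constructor
    · intro ha hb; exact hdis.ne_of_mem ha hb rfl
    · intro hb
      have : a ∈ A ∪ B := hcov ▸ Set.mem_univ a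
      rcases this with h | h
      · exact h
      · exact absurd h hb
  refine ⟨⟨Equiv.refl _, ?_⟩⟩
  rintro (a | b) (a' | b') <;>
    simp only [Equiv.refl_apply, comp, compl_adj, ne_eq, Sum.inl.injEq,
      Sum.inr.injEq, Sum.inl_ne_inr, Sum.inr_ne_inl, not_false_iff, true_and]
  · simp [hmem]
  · simp [hmem]
end

section
/- The composition (G, A, B) ∘ H of a splitted graph (G, A, B) (with A and B nonempty being not required, but G having at least one vertex) and a graph H with at least one vertex contains no induced subgraph isomorphic to 2K_2, C_4, or P_4 having vertices in both V(G) and V(H). -/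
open SimpleGraph Finset

instance : DecidableRel twoK2.Adj := fun a b =>
  inferInstanceAs (Decidable (a ≠ b ∧ _))
instance : DecidableRel cycle4.Adj := fun a b =>
  inferInstanceAs (Decidable (a ≠ b ∧ _))
instance : DecidableRel path4.Adj := fun a b =>
  inferInstanceAs (Decidable (a ≠ b ∧ _))

private def Bad (K : SimpleGraph (Fin 4)) [DecidableRel K.Adj] : Prop :=
  ∃ c : Fin 4 → Fin 3, (∃ i, c i = 2) ∧ (∃ i, c i ≠ 2) ∧
    ∀ i j, i ≠ j →
      ((c i = 1 ∧ c j = 2 → K.Adj i j) ∧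
       (c i = 0 ∧ c j = 2 → ¬K.Adj i j) ∧
       (c i = 1 ∧ c j = 1 → K.Adj i j) ∧
       (c i = 0 ∧ c j = 0 → ¬K.Adj i j))

private lemma notbad_twoK2 : ¬ Bad twoK2 := by unfold Bad; decide
private lemma notbad_cycle4 : ¬ Bad cycle4 := by unfold Bad; decide
private lemma notbad_path4 : ¬ Bad path4 := by unfold Bad; decide

/-- no induced subgraph of a composition `(G, A, B) ∘ H` isomorphic
to `2K₂`, `C₄`, or `P₄` has vertices in both `V(G)` and `V(H)`. -/
theorem stmt7 {α β : Type*} (G : SimpleGraph α) (A B : Set α) (H : SimpleGraph β)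
    (hsplit : IsSplitted G A B) (hα : Nonempty α) (hβ : Nonempty β)
    (s : Set (α ⊕ β))
    (hiso : Nonempty ((comp G B H).induce s ≃g twoK2) ∨
      Nonempty ((comp G B H).induce s ≃g cycle4) ∨
      Nonempty ((comp G B H).induce s ≃g path4))
    (hG : ∃ a : α, Sum.inl a ∈ s) (hH : ∃ b : β, Sum.inr b ∈ s) : False := by
  classical
  obtain ⟨hA, hBcl, hcover, hdisj⟩ := hsplit
  have h2ne : ∀ a : α, (if a ∈ B then (1 : Fin 3) else 0) ≠ 2 := fun a => by
    split <;> decide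
  have main : ∀ (K : SimpleGraph (Fin 4)) (_ : DecidableRel K.Adj),
      ¬ Bad K → ((comp G B H).induce s ≃g K) → False := by
    intro K hdec hK e
    apply hK
    set f : Fin 4 → α ⊕ β := fun i => (e.symm i).val with hf
    have hfinj : Function.Injective f := fun i j h =>
      e.symm.injective (Subtype.val_injective h)
    have hadj : ∀ i j, K.Adj i j ↔ (comp G B H).Adj (f i) (f j) := by
      intro i j
      rw [← e.symm.map_adj_iff]
      rfl
    refine ⟨fun i => Sum.elim (fun a => if a ∈ B then 1 else 0) (fun _ => 2) (f i),
      ?_, ?_, ?_⟩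
    · obtain ⟨b, hb⟩ := hH
      refine ⟨e ⟨Sum.inr b, hb⟩, ?_⟩
      simp [f, RelIso.symm_apply_apply]
    · obtain ⟨a, ha⟩ := hG
      refine ⟨e ⟨Sum.inl a, ha⟩, ?_⟩
      simp only [f, RelIso.symm_apply_apply]
      exact h2ne a
    · intro i j hij
      have hne : f i ≠ f j := fun h => hij (hfinj h)
      rcases hfi : f i with a | b <;> rcases hfj : f j with a' | b' <;>
        simp only [hfi, hfj, Sum.elim_inl, Sum.elim_inr]
      · -- both in α
        rw [hfi, hfj] at hne
        have hne' : a ≠ a' := fun h => hne (by rw [h])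
        refine ⟨fun ⟨_, h2⟩ => absurd h2 (h2ne a'), fun ⟨_, h2⟩ => absurd h2 (h2ne a'),
          ?_, ?_⟩
        · intro ⟨h1, h2⟩
          have haB : a ∈ B := by by_contra hb; rw [if_neg hb] at h1; exact absurd h1 (by decide)
          have haB' : a' ∈ B := by by_contra hb; rw [if_neg hb] at h2; exact absurd h2 (by decide)
          rw [hadj i j, hfi, hfj]
          exact hBcl haB haB' hne'
        · intro ⟨h1, h2⟩
          have haB : a ∉ B := by intro hb; rw [if_pos hb] at h1; exact absurd h1 (by decide)
          have haB' : a' ∉ B := by intro hb; rw [if_pos hb] at h2; exact absurd h2 (by decide)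
          have haA : a ∈ A := (hcover.symm ▸ Set.mem_univ a).elim id (fun h => absurd h haB)
          have haA' : a' ∈ A := (hcover.symm ▸ Set.mem_univ a').elim id (fun h => absurd h haB')
          intro hadj'
          rw [hadj i j, hfi, hfj] at hadj'
          exact hA haA haA' hne' hadj'
      · -- i in α, j in β
        refine ⟨?_, ?_, fun ⟨_, h2⟩ => absurd h2 (by decide),
          fun ⟨_, h2⟩ => absurd h2 (by decide)⟩
        · intro ⟨h1, _⟩
          have haB : a ∈ B := by by_contra hb; rw [if_neg hb] at h1; exact absurd h1 (by decide)
          rw [hadj i j, hfi, hfj]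
          exact haB
        · intro ⟨h1, _⟩
          have haB : a ∉ B := by intro hb; rw [if_pos hb] at h1; exact absurd h1 (by decide)
          intro hadj'
          rw [hadj i j, hfi, hfj] at hadj'
          exact haB hadj'
      · -- i in β, j in α
        exact ⟨fun ⟨h1, _⟩ => absurd h1 (by decide), fun ⟨h1, _⟩ => absurd h1 (by decide),
          fun ⟨h1, _⟩ => absurd h1 (by decide), fun ⟨h1, _⟩ => absurd h1 (by decide)⟩
      · -- both in β
        exact ⟨fun ⟨h1, _⟩ => absurd h1 (by decide), fun ⟨h1, _⟩ => absurd h1 (by decide),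
          fun ⟨h1, _⟩ => absurd h1 (by decide), fun ⟨h1, _⟩ => absurd h1 (by decide)⟩
  rcases hiso with h | h | h
  · obtain ⟨e⟩ := h; exact main twoK2 inferInstance notbad_twoK2 e
  · obtain ⟨e⟩ := h; exact main cycle4 inferInstance notbad_cycle4 e
  · obtain ⟨e⟩ := h; exact main path4 inferInstance notbad_path4 e
end

section
/- For r ≥ 2 and s ≥ 1, the graph K_{1,r} + sK_2 (disjoint union of a star with r leaves and s disjoint edges) is a unigraph: every finite simple graph with degree sequence (r, 1^{2s+r}) is isomorphic to K_{1,r} + sK_2. -/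
open SimpleGraph Finset

/-- The graph `K_{1,r} + sK₂`: a star with center `0` and leaves `1,…,r`,
together with the `s` disjoint edges `{r+1+2t, r+2+2t}` for `t < s`. -/
def starPlusMatching (r s : ℕ) : SimpleGraph (Fin (2 * s + r + 1)) :=
  SimpleGraph.fromRel fun a b =>
    (a.val = 0 ∧ 1 ≤ b.val ∧ b.val ≤ r) ∨
    ∃ t < s, a.val = r + 1 + 2 * t ∧ b.val = r + 2 + 2 * t

/-- for `r ≥ 2` and `s ≥ 1`, the graph `K_{1,r} + sK₂` is a
unigraph: every graph with degree sequence `(r, 1^{2s+r})` is isomorphic to it. -/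
theorem stmt13 (r s : ℕ) (hr : 2 ≤ r) (hs : 1 ≤ s) {V : Type*} [Fintype V]
    (G : SimpleGraph V) (hcard : Fintype.card V = 2 * s + r + 1)
    (hdeg : ∃ v : V, deg G v = r ∧ ∀ w : V, w ≠ v → deg G w = 1) :
    Nonempty (G ≃g starPlusMatching r s) := by
  classical
  obtain ⟨v, hv, hw⟩ := hdeg
  have hdeg' : ∀ w : V, deg G w = G.degree w := by
    intro w
    rw [deg, SimpleGraph.degree, SimpleGraph.neighborFinset, Set.ncard_eq_toFinset_card']
  rw [hdeg'] at hv
  have hw1 : ∀ w : V, w ≠ v → G.degree w = 1 := fun w h => by rw [← hdeg']; exact hw w h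
  have hex : ∀ w : V, ∃ u : V, w ≠ v → G.neighborFinset w = {u} := by
    intro w
    by_cases h : w = v
    · exact ⟨v, fun h' => absurd h h'⟩
    · obtain ⟨u, hu⟩ := Finset.card_eq_one.mp (hw1 w h)
      exact ⟨u, fun _ => hu⟩
  choose f hf using hex
  have hadj : ∀ w : V, w ≠ v → ∀ u, G.Adj w u ↔ u = f w := by
    intro w hwv u
    rw [← SimpleGraph.mem_neighborFinset, hf w hwv, Finset.mem_singleton]
  have hadjf : ∀ w : V, w ≠ v → G.Adj w (f w) := fun w hwv => (hadj w hwv (f w)).2 rfl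
  have hfne : ∀ w : V, w ≠ v → f w ≠ w := by
    intro w hwv h
    exact G.loopless.irrefl w ((hadj w hwv w).2 h.symm)
  have hfv : ∀ w, G.Adj v w → f w = v := by
    intro w h
    have hwv : w ≠ v := fun e => G.loopless.irrefl v (e ▸ h)
    exact ((hadj w hwv v).1 h.symm).symm
  have hffx : ∀ x, x ≠ v → f x ≠ v → f (f x) = x := by
    intro x hx hfx
    exact ((hadj (f x) hfx x).1 (hadjf x hx).symm).symm
  have hfM : ∀ x, x ≠ v → ¬ G.Adj v x → f x ≠ v ∧ ¬ G.Adj v (f x) := by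
    intro x hx ha
    have h1 : f x ≠ v := by
      intro h
      exact ha (h ▸ hadjf x hx).symm
    refine ⟨h1, fun h2 => ?_⟩
    exact hx ((hffx x hx h1).symm.trans (hfv (f x) h2))
  set NB : Finset V := G.neighborFinset v with hNBdef
  have hNB : NB.card = r := hv
  set Mf : Finset V := Finset.univ \ insert v NB with hMfdef
  have hMf_iff : ∀ x, x ∈ Mf ↔ x ≠ v ∧ ¬ G.Adj v x := by
    intro x
    rw [hMfdef]
    simp [hNBdef, SimpleGraph.mem_neighborFinset, not_or]
  have hMvne : ∀ x, x ∈ Mf → x ≠ v := fun x h => ((hMf_iff x).1 h).1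
  have hMna : ∀ x, x ∈ Mf → ¬ G.Adj v x := fun x h => ((hMf_iff x).1 h).2
  have hMf_f : ∀ x, x ∈ Mf → f x ∈ Mf := by
    intro x h
    obtain ⟨h1, h2⟩ := hfM x (hMvne x h) (hMna x h)
    exact (hMf_iff (f x)).2 ⟨h1, h2⟩
  have hvNB : v ∉ NB := by
    rw [hNBdef, SimpleGraph.mem_neighborFinset]
    exact G.loopless.irrefl v
  have hMcard : Mf.card = 2 * s := by
    rw [hMfdef, Finset.card_sdiff_of_subset (Finset.subset_univ _), Finset.card_univ, hcard,
      Finset.card_insert_of_notMem hvNB, hNB]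
    omega
  set e0 : V ≃ Fin (2 * s + r + 1) := Fintype.equivFinOfCardEq hcard with he0def
  set Lf : Finset V := Mf.filter (fun x => e0 x < e0 (f x)) with hLfdef
  have hLf_iff : ∀ x, x ∈ Lf ↔ x ∈ Mf ∧ e0 x < e0 (f x) := fun x => by
    rw [hLfdef, Finset.mem_filter]
  have hLcard : Lf.card = s := by
    set Uf : Finset V := Mf.filter (fun x => ¬ e0 x < e0 (f x)) with hUfdef
    have hsplit : Lf.card + Uf.card = Mf.card := by
      rw [hLfdef, hUfdef]
      exact Finset.card_filter_add_card_filter_not _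
    have hLU : Lf.card = Uf.card := by
      apply Finset.card_bij (fun x _ => f x)
      · intro a ha
        rw [hLf_iff] at ha
        rw [hUfdef, Finset.mem_filter]
        refine ⟨hMf_f a ha.1, ?_⟩
        rw [hffx a (hMvne a ha.1) (hfM a (hMvne a ha.1) (hMna a ha.1)).1]
        exact lt_asymm ha.2
      · intro a ha b hb hab
        rw [hLf_iff] at ha hb
        have h2 := congrArg f hab
        rwa [hffx a (hMvne a ha.1) (hfM a (hMvne a ha.1) (hMna a ha.1)).1,
           hffx b (hMvne b hb.1) (hfM b (hMvne b hb.1) (hMna b hb.1)).1] at h2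
      · intro b hb
        rw [hUfdef, Finset.mem_filter] at hb
        have h1 : f b ∈ Mf := hMf_f b hb.1
        have hb1 := hMvne b hb.1
        have hfb := (hfM b hb1 (hMna b hb.1)).1
        have hff : f (f b) = b := hffx b hb1 hfb
        refine ⟨f b, ?_, hff⟩
        rw [hLf_iff]
        refine ⟨h1, ?_⟩
        rw [hff]
        exact lt_of_le_of_ne (le_of_not_gt hb.2) (fun h => hfne b hb1 (e0.injective h))
    omega
  set eN : {x // x ∈ NB} ≃ Fin r := NB.equivFinOfCardEq hNB with heNdef
  set eL : {x // x ∈ Lf} ≃ Fin s := Lf.equivFinOfCardEq hLcard with heLdef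
  have memN : ∀ x, G.Adj v x → x ∈ NB := fun x h => by
    rw [hNBdef, SimpleGraph.mem_neighborFinset]; exact h
  have memL : ∀ x, x ≠ v → ¬ G.Adj v x → e0 x < e0 (f x) → x ∈ Lf := fun x h1 h2 h3 =>
    (hLf_iff x).2 ⟨(hMf_iff x).2 ⟨h1, h2⟩, h3⟩
  have memL' : ∀ x, x ≠ v → ¬ G.Adj v x → ¬ e0 x < e0 (f x) → f x ∈ Lf := by
    intro x h1 h2 h3
    have hm : x ∈ Mf := (hMf_iff x).2 ⟨h1, h2⟩
    have hff : f (f x) = x := hffx x h1 (hfM x h1 h2).1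
    rw [hLf_iff]
    refine ⟨hMf_f x hm, ?_⟩
    rw [hff]
    exact lt_of_le_of_ne (le_of_not_gt h3) (fun h => hfne x h1 (e0.injective h))
  set φ : V → Fin (2 * s + r + 1) := fun x =>
    if hx : x = v then ⟨0, by omega⟩
    else if ha : G.Adj v x then
      ⟨1 + (eN ⟨x, memN x ha⟩).val, by have := (eN ⟨x, memN x ha⟩).isLt; omega⟩
    else if hlt : e0 x < e0 (f x) then
      ⟨r + 1 + 2 * (eL ⟨x, memL x hx ha hlt⟩).val, by
        have := (eL ⟨x, memL x hx ha hlt⟩).isLt; omega⟩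
    else
      ⟨r + 2 + 2 * (eL ⟨f x, memL' x hx ha hlt⟩).val, by
        have := (eL ⟨f x, memL' x hx ha hlt⟩).isLt; omega⟩
    with hphidef
  have hphi1 : (φ v).val = 0 := by rw [hphidef]; simp
  have hphi2 : ∀ x (hx : x ≠ v) (ha : G.Adj v x),
      (φ x).val = 1 + (eN ⟨x, memN x ha⟩).val := by
    intro x hx ha
    rw [hphidef]
    simp [hx, ha]
  have hphi3 : ∀ x (hx : x ≠ v) (ha : ¬ G.Adj v x) (hlt : e0 x < e0 (f x)),
      (φ x).val = r + 1 + 2 * (eL ⟨x, memL x hx ha hlt⟩).val := by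
    intro x hx ha hlt
    rw [hphidef]
    simp [hx, ha, hlt]
  have hphi4 : ∀ x (hx : x ≠ v) (ha : ¬ G.Adj v x) (hlt : ¬ e0 x < e0 (f x)),
      (φ x).val = r + 2 + 2 * (eL ⟨f x, memL' x hx ha hlt⟩).val := by
    intro x hx ha hlt
    rw [hphidef]
    simp [hx, ha, hlt]
  have hclass : ∀ x : V,
      (x = v ∧ (φ x).val = 0) ∨
      (∃ h : x ∈ NB, (eN ⟨x, h⟩).val < r ∧ (φ x).val = 1 + (eN ⟨x, h⟩).val) ∨
      (∃ h : x ∈ Lf, (eL ⟨x, h⟩).val < s ∧ (φ x).val = r + 1 + 2 * (eL ⟨x, h⟩).val) ∨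
      (∃ h : f x ∈ Lf, x = f (f x) ∧ (eL ⟨f x, h⟩).val < s ∧
        (φ x).val = r + 2 + 2 * (eL ⟨f x, h⟩).val) := by
    intro x
    by_cases hx : x = v
    · exact Or.inl ⟨hx, hx ▸ hphi1⟩
    by_cases ha : G.Adj v x
    · exact Or.inr (Or.inl ⟨memN x ha, (eN _).isLt, hphi2 x hx ha⟩)
    by_cases hlt : e0 x < e0 (f x)
    · exact Or.inr (Or.inr (Or.inl ⟨memL x hx ha hlt, (eL _).isLt, hphi3 x hx ha hlt⟩))
    · exact Or.inr (Or.inr (Or.inr ⟨memL' x hx ha hlt, (hffx x hx (hfM x hx ha).1).symm,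
        (eL _).isLt, hphi4 x hx ha hlt⟩))
  have hLfMf : ∀ x, x ∈ Lf → x ∈ Mf := fun x h => ((hLf_iff x).1 h).1
  have hinj : Function.Injective φ := by
    intro x y hxy
    have h : (φ x).val = (φ y).val := by rw [hxy]
    rcases hclass x with (⟨hx, hx0⟩ | ⟨hxN, hxb, hxv⟩ | ⟨hxL, hxb, hxv⟩ | ⟨hxL, hxe, hxb, hxv⟩) <;>
      rcases hclass y with (⟨hy, hy0⟩ | ⟨hyN, hyb, hyv⟩ | ⟨hyL, hyb, hyv⟩ | ⟨hyL, hye, hyb, hyv⟩) <;>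
      try omega
    · exact hx.trans hy.symm
    · have h2 : (⟨x, hxN⟩ : {z // z ∈ NB}) = ⟨y, hyN⟩ := eN.injective (Fin.val_injective (by omega))
      exact congrArg Subtype.val h2
    · have h2 : (⟨x, hxL⟩ : {z // z ∈ Lf}) = ⟨y, hyL⟩ := eL.injective (Fin.val_injective (by omega))
      exact congrArg Subtype.val h2
    · have h2 : (⟨f x, hxL⟩ : {z // z ∈ Lf}) = ⟨f y, hyL⟩ :=
        eL.injective (Fin.val_injective (by omega))
      have h3 : f x = f y := congrArg Subtype.val h2
      rw [hxe, hye, h3]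
  have hstar : ∀ a b : Fin (2 * s + r + 1), (starPlusMatching r s).Adj a b ↔
      a.val ≠ b.val ∧
      (((a.val = 0 ∧ 1 ≤ b.val ∧ b.val ≤ r) ∨
        ∃ t, t < s ∧ a.val = r + 1 + 2 * t ∧ b.val = r + 2 + 2 * t) ∨
       ((b.val = 0 ∧ 1 ≤ a.val ∧ a.val ≤ r) ∨
        ∃ t, t < s ∧ b.val = r + 1 + 2 * t ∧ a.val = r + 2 + 2 * t)) := by
    intro a b
    rw [starPlusMatching, SimpleGraph.fromRel_adj]
    simp only [ne_eq, Fin.ext_iff]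
  have hfor : ∀ x y, G.Adj x y → (starPlusMatching r s).Adj (φ x) (φ y) := by
    intro x y hxy
    rw [hstar]
    refine ⟨fun hc => G.ne_of_adj hxy (hinj (Fin.val_injective hc)), ?_⟩
    by_cases hx : x = v
    · have hvy : G.Adj v y := by rw [hx] at hxy; exact hxy
      have hy : y ≠ v := fun e => G.loopless.irrefl v (by rw [e] at hvy; exact hvy)
      have h2 := hphi2 y hy hvy
      have h3 := (eN ⟨y, memN y hvy⟩).isLt
      have h0 : (φ x).val = 0 := by rw [hx]; exact hphi1
      exact Or.inl (Or.inl ⟨h0, by omega, by omega⟩)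
    by_cases hy : y = v
    · have hvx : G.Adj v x := by rw [hy] at hxy; exact hxy.symm
      have h2 := hphi2 x hx hvx
      have h3 := (eN ⟨x, memN x hvx⟩).isLt
      have h0 : (φ y).val = 0 := by rw [hy]; exact hphi1
      exact Or.inr (Or.inl ⟨h0, by omega, by omega⟩)
    · have hyx : y = f x := (hadj x hx y).1 hxy
      have hxfy : x = f y := (hadj y hy x).1 hxy.symm
      have hax : ¬ G.Adj v x := fun h => hy (hyx.trans (hfv x h))
      have hay : ¬ G.Adj v y := fun h => hx (hxfy.trans (hfv y h))
      by_cases hlt : e0 x < e0 (f x)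
      · have h3 := hphi3 x hx hax hlt
        have hlty : ¬ e0 y < e0 (f y) := by
          rw [← hxfy, hyx]
          exact lt_asymm hlt
        have h4 := hphi4 y hy hay hlty
        have hsub : (⟨f y, memL' y hy hay hlty⟩ : {z // z ∈ Lf}) = ⟨x, memL x hx hax hlt⟩ :=
          Subtype.ext hxfy.symm
        rw [hsub] at h4
        exact Or.inl (Or.inr ⟨(eL ⟨x, memL x hx hax hlt⟩).val, (eL _).isLt, h3, h4⟩)
      · have hlty : e0 y < e0 (f y) := by
          rw [← hxfy, hyx]
          exact lt_of_le_of_ne (le_of_not_gt hlt) (fun h => hfne x hx (e0.injective h))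
        have h3 := hphi3 y hy hay hlty
        have h4 := hphi4 x hx hax hlt
        have hsub : (⟨f x, memL' x hx hax hlt⟩ : {z // z ∈ Lf}) = ⟨y, memL y hy hay hlty⟩ :=
          Subtype.ext hyx.symm
        rw [hsub] at h4
        exact Or.inr (Or.inr ⟨(eL ⟨y, memL y hy hay hlty⟩).val, (eL _).isLt, h3, h4⟩)
  have hback : ∀ x y, (starPlusMatching r s).Adj (φ x) (φ y) → G.Adj x y := by
    intro x y hxy
    rw [hstar] at hxy
    obtain ⟨hne, hcase⟩ := hxy
    rcases hclass x with (⟨hx, hx0⟩ | ⟨hxN, hxb, hxv⟩ | ⟨hxL, hxb, hxv⟩ | ⟨hxL, hxe, hxb, hxv⟩) <;>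
      rcases hclass y with (⟨hy, hy0⟩ | ⟨hyN, hyb, hyv⟩ | ⟨hyL, hyb, hyv⟩ | ⟨hyL, hye, hyb, hyv⟩) <;>
      rcases hcase with ((⟨h1, h2, h3⟩ | ⟨t, ht, h1, h2⟩) | (⟨h1, h2, h3⟩ | ⟨t, ht, h1, h2⟩)) <;>
      try omega
    · rw [hx]
      exact (SimpleGraph.mem_neighborFinset G v y).1 hyN
    · rw [hy]
      exact ((SimpleGraph.mem_neighborFinset G v x).1 hxN).symm
    · -- x in Lf, y = f (f y) with f y in Lf; first matching disjunct
      have h5 : (⟨x, hxL⟩ : {z // z ∈ Lf}) = ⟨f y, hyL⟩ :=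
        eL.injective (Fin.val_injective (by omega))
      have hxfy : x = f y := congrArg Subtype.val h5
      have hyM : y ∈ Mf := hye ▸ hMf_f (f y) (hLfMf (f y) hyL)
      have hyv : y ≠ v := hMvne y hyM
      have := hadjf y hyv
      rw [← hxfy] at this
      exact this.symm
    · have h5 : (⟨y, hyL⟩ : {z // z ∈ Lf}) = ⟨f x, hxL⟩ :=
        eL.injective (Fin.val_injective (by omega))
      have hyfx : y = f x := congrArg Subtype.val h5
      have hxM : x ∈ Mf := hxe ▸ hMf_f (f x) (hLfMf (f x) hxL)
      have hxv' : x ≠ v := hMvne x hxM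
      have := hadjf x hxv'
      rw [← hyfx] at this
      exact this
  have hbij : Function.Bijective φ :=
    (Fintype.bijective_iff_injective_and_card φ).2 ⟨hinj, by rw [hcard, Fintype.card_fin]⟩
  exact ⟨{ toEquiv := Equiv.ofBijective φ hbij,
           map_rel_iff' := fun {a b} => ⟨hback a b, hfor a b⟩ }⟩
end
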